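/- arXiv:0909.5683 — 5 statements merged into one kernel-verified Lean document; each statement's English description precedes it below -/
import Mathlib

section
/- Let P be a d-independent property of F. Then for every real multivariate polynomial p in the variables indexed by D × R of total degree at most d, the average of p(δ_f) over f ∈ P⁻¹(1) equals the average of p(δ_f) over f ∈ P⁻¹(0); that is, (1/|P⁻¹(1)|)·Σ_{f∈P⁻¹(1)} p(δ_f) = (1/|P⁻¹(0)|)·Σ_{f∈P⁻¹(0)} p(δ_f). -/
/-- For a `d`-independent property `P` of a nonempty finite family `F` of
functions `D → R` (with `P` attaining both values), every real multivariate polynomial `p`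
in variables indexed by `D × R` of total degree at most `d` has the same average of
`p(δ_f)` over `f ∈ P⁻¹ 1` as over `f ∈ P⁻¹ 0`. -/
theorem stmt0 {D R : Type} [Fintype D] [Fintype R] [DecidableEq D] [DecidableEq R]
    [Nonempty D] [Nonempty R]
    (F : Finset (D → R)) (hF : F.Nonempty)
    (P : (D → R) → Fin 2) (d : ℕ)
    (hP0 : (F.filter (fun f => P f = 0)).Nonempty)
    (hP1 : (F.filter (fun f => P f = 1)).Nonempty)
    (hInd : ∀ (z : Fin d → D) (y : Fin d → R) (b : Fin 2),
      (F.filter (fun f => P f = b ∧ ∀ j, f (z j) = y j)).card * F.card =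
        (F.filter (fun f => ∀ j, f (z j) = y j)).card *
          (F.filter (fun f => P f = b)).card)
    (p : MvPolynomial (D × R) ℝ) (hdeg : p.totalDegree ≤ d) :
    (1 / ((F.filter (fun f => P f = 1)).card : ℝ)) *
        ∑ f ∈ F.filter (fun f => P f = 1),
          MvPolynomial.eval (fun xy => if f xy.1 = xy.2 then (1 : ℝ) else 0) p =
    (1 / ((F.filter (fun f => P f = 0)).card : ℝ)) *
        ∑ f ∈ F.filter (fun f => P f = 0),
          MvPolynomial.eval (fun xy => if f xy.1 = xy.2 then (1 : ℝ) else 0) p := by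
  classical
  have hFpos : 0 < F.card := hF.card_pos
  -- key combinatorial identity for each monomial in the support of p
  have key : ∀ m ∈ p.support, ∀ b : Fin 2,
      (F.filter (fun f => P f = b ∧ ∀ xy ∈ m.support, f xy.1 = xy.2)).card * F.card
        = (F.filter (fun f => ∀ xy ∈ m.support, f xy.1 = xy.2)).card *
          (F.filter (fun f => P f = b)).card := by
    intro m hm b
    rcases eq_or_ne m.support ∅ with hs | hs
    · simp [hs, mul_comm]
    · obtain ⟨e, he⟩ := Finset.nonempty_iff_ne_empty.2 hs
      set L := m.support.toList with hLdef
      have hlen : L.length = m.support.card := Finset.length_toList _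
      have hcard_le : m.support.card ≤ d := by
        have h1 : m.support.card ≤ m.sum fun _ e => e := by
          rw [Finsupp.sum]
          calc m.support.card = ∑ _xy ∈ m.support, 1 := by simp
            _ ≤ ∑ xy ∈ m.support, m xy := Finset.sum_le_sum (by
                intro i hi
                exact Nat.one_le_iff_ne_zero.2 (Finsupp.mem_support_iff.1 hi))
        exact h1.trans ((MvPolynomial.le_totalDegree hm).trans hdeg)
      have hlend : L.length ≤ d := hlen ▸ hcard_le
      set s : Fin d → D × R := fun j => L.getD j e with hsdef
      have hmem : ∀ j : Fin d, s j ∈ m.support := by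
        intro j
        by_cases hj : (j : ℕ) < L.length
        · have : s j = L.get ⟨j, hj⟩ := List.getD_eq_get _ _ ⟨j, hj⟩
          rw [this]
          exact Finset.mem_toList.1 (List.get_mem L ⟨j, hj⟩)
        · have : s j = e := List.getD_eq_default _ _ (not_lt.mp hj)
          rw [this]; exact he
      have hiff : ∀ f : D → R,
          (∀ j : Fin d, f (s j).1 = (s j).2) ↔ ∀ xy ∈ m.support, f xy.1 = xy.2 := by
        intro f
        constructor
        · intro h xy hxy
          have hxL : xy ∈ L := Finset.mem_toList.2 hxy
          obtain ⟨i, hget⟩ := List.mem_iff_get.1 hxL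
          have hid : (i : ℕ) < d := lt_of_lt_of_le i.isLt hlend
          have hsj : s ⟨i, hid⟩ = xy := by
            have := List.getD_eq_get L e i
            simpa [hsdef, this] using hget
          have := h ⟨i, hid⟩
          rwa [hsj] at this
        · intro h j
          exact h (s j) (hmem j)
      have hI := hInd (fun j => (s j).1) (fun j => (s j).2) b
      have e1 : F.filter (fun f => P f = b ∧ ∀ j, f (s j).1 = (s j).2)
          = F.filter (fun f => P f = b ∧ ∀ xy ∈ m.support, f xy.1 = xy.2) := by
        apply Finset.filter_congr; intro f _; simp [hiff f]
      have e2 : F.filter (fun f => ∀ j, f (s j).1 = (s j).2)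
          = F.filter (fun f => ∀ xy ∈ m.support, f xy.1 = xy.2) := by
        apply Finset.filter_congr; intro f _; simp [hiff f]
      rw [e1, e2] at hI
      exact hI
  -- rewrite the sums over each class as a linear combination of counts
  have hsum : ∀ b : Fin 2,
      ∑ f ∈ F.filter (fun f => P f = b),
          MvPolynomial.eval (fun xy => if f xy.1 = xy.2 then (1 : ℝ) else 0) p
        = ∑ m ∈ p.support, MvPolynomial.coeff m p *
            ((F.filter (fun f => P f = b ∧ ∀ xy ∈ m.support, f xy.1 = xy.2)).card : ℝ) := by
    intro b
    have hprod : ∀ (f : D → R) (m : (D × R) →₀ ℕ),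
        (∏ xy ∈ m.support, (if f xy.1 = xy.2 then (1 : ℝ) else 0) ^ m xy)
          = if (∀ xy ∈ m.support, f xy.1 = xy.2) then (1 : ℝ) else 0 := by
      intro f m
      by_cases h : ∀ xy ∈ m.support, f xy.1 = xy.2
      · rw [if_pos h]
        apply Finset.prod_eq_one
        intro xy hxy
        rw [if_pos (h xy hxy), one_pow]
      · rw [if_neg h]
        push_neg at h
        obtain ⟨xy, hxy, hne⟩ := h
        apply Finset.prod_eq_zero hxy
        rw [if_neg hne, zero_pow (Finsupp.mem_support_iff.1 hxy)]
    calc ∑ f ∈ F.filter (fun f => P f = b),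
            MvPolynomial.eval (fun xy => if f xy.1 = xy.2 then (1 : ℝ) else 0) p
        = ∑ f ∈ F.filter (fun f => P f = b), ∑ m ∈ p.support,
            MvPolynomial.coeff m p *
              (if (∀ xy ∈ m.support, f xy.1 = xy.2) then (1 : ℝ) else 0) := by
          apply Finset.sum_congr rfl
          intro f _
          rw [MvPolynomial.eval_eq]
          apply Finset.sum_congr rfl
          intro m _
          rw [hprod f m]
      _ = ∑ m ∈ p.support, ∑ f ∈ F.filter (fun f => P f = b),
            MvPolynomial.coeff m p *
              (if (∀ xy ∈ m.support, f xy.1 = xy.2) then (1 : ℝ) else 0) :=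
          Finset.sum_comm
      _ = ∑ m ∈ p.support, MvPolynomial.coeff m p *
            ((F.filter (fun f => P f = b ∧ ∀ xy ∈ m.support, f xy.1 = xy.2)).card : ℝ) := by
          apply Finset.sum_congr rfl
          intro m _
          rw [← Finset.mul_sum, Finset.sum_boole, Finset.filter_filter]
  -- the main cross-multiplied identity
  have hmain :
      (∑ f ∈ F.filter (fun f => P f = 1),
          MvPolynomial.eval (fun xy => if f xy.1 = xy.2 then (1 : ℝ) else 0) p)
        * ((F.filter (fun f => P f = 0)).card : ℝ)
      = (∑ f ∈ F.filter (fun f => P f = 0),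
          MvPolynomial.eval (fun xy => if f xy.1 = xy.2 then (1 : ℝ) else 0) p)
        * ((F.filter (fun f => P f = 1)).card : ℝ) := by
    rw [hsum 0, hsum 1, Finset.sum_mul, Finset.sum_mul]
    apply Finset.sum_congr rfl
    intro m hm
    have h1 := key m hm 1
    have h0 := key m hm 0
    have hnat :
        (F.filter (fun f => P f = 1 ∧ ∀ xy ∈ m.support, f xy.1 = xy.2)).card
            * (F.filter (fun f => P f = 0)).card
          = (F.filter (fun f => P f = 0 ∧ ∀ xy ∈ m.support, f xy.1 = xy.2)).card
            * (F.filter (fun f => P f = 1)).card := by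
      have := congrArg (· * (F.filter (fun f => P f = 0)).card) h1
      apply Nat.eq_of_mul_eq_mul_right hFpos
      calc (F.filter (fun f => P f = 1 ∧ ∀ xy ∈ m.support, f xy.1 = xy.2)).card
              * (F.filter (fun f => P f = 0)).card * F.card
          = (F.filter (fun f => P f = 1 ∧ ∀ xy ∈ m.support, f xy.1 = xy.2)).card * F.card
              * (F.filter (fun f => P f = 0)).card := by ring
        _ = (F.filter (fun f => ∀ xy ∈ m.support, f xy.1 = xy.2)).card
              * (F.filter (fun f => P f = 1)).card
              * (F.filter (fun f => P f = 0)).card := by rw [h1]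
        _ = (F.filter (fun f => ∀ xy ∈ m.support, f xy.1 = xy.2)).card
              * (F.filter (fun f => P f = 0)).card
              * (F.filter (fun f => P f = 1)).card := by ring
        _ = (F.filter (fun f => P f = 0 ∧ ∀ xy ∈ m.support, f xy.1 = xy.2)).card * F.card
              * (F.filter (fun f => P f = 1)).card := by rw [h0]
        _ = (F.filter (fun f => P f = 0 ∧ ∀ xy ∈ m.support, f xy.1 = xy.2)).card
              * (F.filter (fun f => P f = 1)).card * F.card := by ring
    have hreal : ((F.filter (fun f => P f = 1 ∧ ∀ xy ∈ m.support, f xy.1 = xy.2)).card : ℝ)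
            * ((F.filter (fun f => P f = 0)).card : ℝ)
          = ((F.filter (fun f => P f = 0 ∧ ∀ xy ∈ m.support, f xy.1 = xy.2)).card : ℝ)
            * ((F.filter (fun f => P f = 1)).card : ℝ) := by
      exact_mod_cast congrArg (Nat.cast : ℕ → ℝ) hnat
    calc MvPolynomial.coeff m p
            * ((F.filter (fun f => P f = 1 ∧ ∀ xy ∈ m.support, f xy.1 = xy.2)).card : ℝ)
            * ((F.filter (fun f => P f = 0)).card : ℝ)
        = MvPolynomial.coeff m p
            * (((F.filter (fun f => P f = 1 ∧ ∀ xy ∈ m.support, f xy.1 = xy.2)).card : ℝ)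
            * ((F.filter (fun f => P f = 0)).card : ℝ)) := by ring
      _ = MvPolynomial.coeff m p
            * (((F.filter (fun f => P f = 0 ∧ ∀ xy ∈ m.support, f xy.1 = xy.2)).card : ℝ)
            * ((F.filter (fun f => P f = 1)).card : ℝ)) := by rw [hreal]
      _ = MvPolynomial.coeff m p
            * ((F.filter (fun f => P f = 0 ∧ ∀ xy ∈ m.support, f xy.1 = xy.2)).card : ℝ)
            * ((F.filter (fun f => P f = 1)).card : ℝ) := by ring
  have hc0 : ((F.filter (fun f => P f = 0)).card : ℝ) ≠ 0 := by
    exact_mod_cast hP0.card_pos.ne'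
  have hc1 : ((F.filter (fun f => P f = 1)).card : ℝ) ≠ 0 := by
    exact_mod_cast hP1.card_pos.ne'
  field_simp
  linarith [hmain]
end

section
/- Let P be a d-independent property of F. Then there is no real multivariate polynomial p in the variables indexed by D × R of total degree at most d such that p(δ_f) < 1/2 for every f ∈ F with P(f) = 0 and p(δ_f) > 1/2 for every f ∈ F with P(f) = 1. (By the polynomial method, this is the content of Theorem 1: any quantum query algorithm in the chosen-input model computing P with positive bias makes, after writing its acceptance probability as a polynomial of degree at most twice the number of queries, at least (d+1)/2 queries.) -/
/-- For a `d`-independent property `P` of a nonempty finite family `F` of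
functions `D → R` (with `P` attaining both values), there is no real multivariate
polynomial `p` in variables indexed by `D × R` of total degree at most `d` with
`p(δ_f) < 1/2` whenever `P f = 0` and `p(δ_f) > 1/2` whenever `P f = 1`. -/
theorem stmt1 {D R : Type} [Fintype D] [Fintype R] [DecidableEq D] [DecidableEq R]
    [Nonempty D] [Nonempty R]
    (F : Finset (D → R)) (hF : F.Nonempty)
    (P : (D → R) → Fin 2) (d : ℕ)
    (hP0 : (F.filter (fun f => P f = 0)).Nonempty)
    (hP1 : (F.filter (fun f => P f = 1)).Nonempty)
    (hInd : ∀ (z : Fin d → D) (y : Fin d → R) (b : Fin 2),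
      (F.filter (fun f => P f = b ∧ ∀ j, f (z j) = y j)).card * F.card =
        (F.filter (fun f => ∀ j, f (z j) = y j)).card *
          (F.filter (fun f => P f = b)).card) :
    ¬ ∃ p : MvPolynomial (D × R) ℝ, p.totalDegree ≤ d ∧
      (∀ f ∈ F, P f = 0 →
        MvPolynomial.eval (fun xy => if f xy.1 = xy.2 then (1 : ℝ) else 0) p < 1 / 2) ∧
      (∀ f ∈ F, P f = 1 →
        MvPolynomial.eval (fun xy => if f xy.1 = xy.2 then (1 : ℝ) else 0) p > 1 / 2) := by
  classical
  rintro ⟨p, hdeg, h0, h1⟩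
  set A0 := F.filter (fun f => P f = 0) with hA0
  set A1 := F.filter (fun f => P f = 1) with hA1
  have hc0 : 0 < A0.card := Finset.card_pos.mpr hP0
  have hc1 : 0 < A1.card := Finset.card_pos.mpr hP1
  have hN : 0 < F.card := Finset.card_pos.mpr hF
  -- Key combinatorial lemma from d-independence
  have key : ∀ S : Finset (D × R), S.card ≤ d →
      (F.filter (fun f => P f = 0 ∧ ∀ i ∈ S, f i.1 = i.2)).card * A1.card =
      (F.filter (fun f => P f = 1 ∧ ∀ i ∈ S, f i.1 = i.2)).card * A0.card := by
    intro S hS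
    rcases S.eq_empty_or_nonempty with rfl | hSne
    · simp only [Finset.notMem_empty, false_implies, implies_true, and_true]
      rw [← hA0, ← hA1, mul_comm]
    · obtain ⟨a, ha⟩ := hSne
      set l := S.toList with hl
      have hlen : l.length = S.card := S.length_toList
      have hspos : 0 < l.length := by
        rw [hlen]; exact Finset.card_pos.mpr ⟨a, ha⟩
      set g : Fin d → D × R := fun j =>
        l.get ⟨min j (l.length - 1), by omega⟩ with hg
      have hmemg : ∀ j, g j ∈ S := by
        intro j
        rw [← Finset.mem_toList]
        exact List.get_mem _ _
      have hcond : ∀ f : D → R,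
          (∀ j : Fin d, f (g j).1 = (g j).2) ↔ ∀ i ∈ S, f i.1 = i.2 := by
        intro f
        constructor
        · intro h i hi
          rw [← Finset.mem_toList, List.mem_iff_get] at hi
          obtain ⟨k, hk⟩ := hi
          have hkl : (k : ℕ) < l.length := k.2
          have hkd : (k : ℕ) < d := by omega
          have hgk : g ⟨k, hkd⟩ = l.get k := by
            simp only [hg]
            congr 1
            exact Fin.ext (by simp; omega)
          have h' := h ⟨k, hkd⟩
          rw [hgk, hk] at h'
          exact h'
        · intro h j
          exact h (g j) (hmemg j)
      have h0' := hInd (fun j => (g j).1) (fun j => (g j).2) 0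
      have h1' := hInd (fun j => (g j).1) (fun j => (g j).2) 1
      have e0 : (F.filter (fun f => P f = 0 ∧ ∀ j, f (g j).1 = (g j).2)) =
          F.filter (fun f => P f = 0 ∧ ∀ i ∈ S, f i.1 = i.2) := by
        apply Finset.filter_congr; intro f _; rw [hcond f]
      have e1 : (F.filter (fun f => P f = 1 ∧ ∀ j, f (g j).1 = (g j).2)) =
          F.filter (fun f => P f = 1 ∧ ∀ i ∈ S, f i.1 = i.2) := by
        apply Finset.filter_congr; intro f _; rw [hcond f]
      rw [e0, ← hA0] at h0'
      rw [e1, ← hA1] at h1'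
      have := congrArg (· * A1.card) h0'
      have h2 : (F.filter (fun f => P f = 0 ∧ ∀ i ∈ S, f i.1 = i.2)).card * A1.card * F.card =
          (F.filter (fun f => P f = 1 ∧ ∀ i ∈ S, f i.1 = i.2)).card * A0.card * F.card := by
        calc (F.filter (fun f => P f = 0 ∧ ∀ i ∈ S, f i.1 = i.2)).card * A1.card * F.card
            = (F.filter (fun f => P f = 0 ∧ ∀ i ∈ S, f i.1 = i.2)).card * F.card * A1.card := by ring
          _ = (F.filter (fun f => ∀ j, f (g j).1 = (g j).2)).card * A0.card * A1.card := by rw [h0']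
          _ = (F.filter (fun f => ∀ j, f (g j).1 = (g j).2)).card * A1.card * A0.card := by ring
          _ = (F.filter (fun f => P f = 1 ∧ ∀ i ∈ S, f i.1 = i.2)).card * F.card * A0.card := by rw [h1']
          _ = (F.filter (fun f => P f = 1 ∧ ∀ i ∈ S, f i.1 = i.2)).card * A0.card * F.card := by ring
      exact Nat.eq_of_mul_eq_mul_right hN h2
  -- Evaluation of δ_f at a monomial is a boolean indicator
  have prodeq : ∀ (f : D → R) (m : (D × R) →₀ ℕ), m ∈ p.support →
      (∏ i ∈ m.support, (if f i.1 = i.2 then (1:ℝ) else 0) ^ m i) =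
      if ∀ i ∈ m.support, f i.1 = i.2 then 1 else 0 := by
    intro f m _
    have step : (∏ i ∈ m.support, (if f i.1 = i.2 then (1:ℝ) else 0) ^ m i) =
        ∏ i ∈ m.support, (if f i.1 = i.2 then (1:ℝ) else 0) := by
      apply Finset.prod_congr rfl
      intro i hi
      have : m i ≠ 0 := Finsupp.mem_support_iff.mp hi
      by_cases hfi : f i.1 = i.2 <;> simp [hfi, zero_pow this]
    rw [step, Finset.prod_boole]
    convert rfl
  -- Expand sums of evaluations over a set
  have expand : ∀ A : Finset (D → R),
      (∑ f ∈ A, MvPolynomial.eval (fun xy => if f xy.1 = xy.2 then (1:ℝ) else 0) p) =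
      ∑ m ∈ p.support, p.coeff m *
        ((A.filter (fun f => ∀ i ∈ m.support, f i.1 = i.2)).card : ℝ) := by
    intro A
    have : ∀ f ∈ A, MvPolynomial.eval (fun xy => if f xy.1 = xy.2 then (1:ℝ) else 0) p =
        ∑ m ∈ p.support, p.coeff m * (if ∀ i ∈ m.support, f i.1 = i.2 then (1:ℝ) else 0) := by
      intro f _
      rw [MvPolynomial.eval_eq]
      exact Finset.sum_congr rfl fun m hm => by rw [prodeq f m hm]
    rw [Finset.sum_congr rfl this, Finset.sum_comm]
    apply Finset.sum_congr rfl
    intro m _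
    rw [← Finset.mul_sum, Finset.sum_boole]
  -- support card bound
  have hsupp : ∀ m ∈ p.support, m.support.card ≤ d := by
    intro m hm
    have h1 : m.support.card ≤ ∑ i ∈ m.support, m i := by
      calc m.support.card = ∑ _i ∈ m.support, 1 := by simp
        _ ≤ ∑ i ∈ m.support, m i := Finset.sum_le_sum fun i hi =>
            Nat.one_le_iff_ne_zero.mpr (Finsupp.mem_support_iff.mp hi)
    have h2 : (∑ i ∈ m.support, m i) ≤ p.totalDegree :=
      MvPolynomial.le_totalDegree hm
    omega
  -- the two averages coincide
  have sum_eq : (A1.card : ℝ) *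
      (∑ f ∈ A0, MvPolynomial.eval (fun xy => if f xy.1 = xy.2 then (1:ℝ) else 0) p) =
      (A0.card : ℝ) *
      (∑ f ∈ A1, MvPolynomial.eval (fun xy => if f xy.1 = xy.2 then (1:ℝ) else 0) p) := by
    rw [expand A0, expand A1, Finset.mul_sum, Finset.mul_sum]
    apply Finset.sum_congr rfl
    intro m hm
    have hk := key m.support (hsupp m hm)
    have e0 : A0.filter (fun f => ∀ i ∈ m.support, f i.1 = i.2) =
        F.filter (fun f => P f = 0 ∧ ∀ i ∈ m.support, f i.1 = i.2) := by
      rw [hA0, Finset.filter_filter]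
    have e1 : A1.filter (fun f => ∀ i ∈ m.support, f i.1 = i.2) =
        F.filter (fun f => P f = 1 ∧ ∀ i ∈ m.support, f i.1 = i.2) := by
      rw [hA1, Finset.filter_filter]
    have hkr : (A1.card : ℝ) * ((A0.filter (fun f => ∀ i ∈ m.support, f i.1 = i.2)).card : ℝ) =
        (A0.card : ℝ) * ((A1.filter (fun f => ∀ i ∈ m.support, f i.1 = i.2)).card : ℝ) := by
      rw [e0, e1]
      have hkr' := congrArg (Nat.cast : ℕ → ℝ) hk
      push_cast at hkr'
      linarith
    calc (A1.card : ℝ) * (p.coeff m * ((A0.filter (fun f => ∀ i ∈ m.support, f i.1 = i.2)).card : ℝ))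
        = p.coeff m * ((A1.card : ℝ) * ((A0.filter (fun f => ∀ i ∈ m.support, f i.1 = i.2)).card : ℝ)) := by ring
      _ = p.coeff m * ((A0.card : ℝ) * ((A1.filter (fun f => ∀ i ∈ m.support, f i.1 = i.2)).card : ℝ)) := by rw [hkr]
      _ = (A0.card : ℝ) * (p.coeff m * ((A1.filter (fun f => ∀ i ∈ m.support, f i.1 = i.2)).card : ℝ)) := by ring
  -- derive the contradiction
  have hlt0 : (∑ f ∈ A0, MvPolynomial.eval (fun xy => if f xy.1 = xy.2 then (1:ℝ) else 0) p) <
      (A0.card : ℝ) * (1/2) := by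
    have := Finset.sum_lt_sum_of_nonempty hP0 (fun f hf => by
      rw [hA0, Finset.mem_filter] at hf
      exact h0 f hf.1 hf.2 : ∀ f ∈ A0, _ < (1/2 : ℝ))
    simpa [mul_comm] using this
  have hgt1 : (A1.card : ℝ) * (1/2) <
      (∑ f ∈ A1, MvPolynomial.eval (fun xy => if f xy.1 = xy.2 then (1:ℝ) else 0) p) := by
    have := Finset.sum_lt_sum_of_nonempty hP1 (fun f hf => by
      rw [hA1, Finset.mem_filter] at hf
      exact h1 f hf.1 hf.2 : ∀ f ∈ A1, (1/2 : ℝ) < _)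
    simpa [mul_comm] using this
  have hc0' : (0:ℝ) < A0.card := by exact_mod_cast hc0
  have hc1' : (0:ℝ) < A1.card := by exact_mod_cast hc1
  nlinarith [mul_lt_mul_of_pos_left hlt0 hc1', mul_lt_mul_of_pos_left hgt1 hc0']
end

section
/- Let |D| = n, let S ⊆ D, let P be a (d,S)-independent property of F, and let Δ be a permutation-independent probability distribution on bijections X : {1,…,n} → D. Let p be a real multivariate polynomial in the variables indexed by {1,…,n} × D × R of total degree at most d such that 0 ≤ p(δ_{X,Y}) ≤ 1 for every pair of maps X : {1,…,n} → D and Y : {1,…,n} → R. Then there exists a real polynomial q, in the variables δ_{i,x,y} for (i,x,y) ∈ {1,…,n} × S × R together with variables ξ_{i,x} for i ∈ {1,…,n} and x ∈ D∖S, with total degree at most the total degree of p, such that: (a) for every X : {1,…,n} → D and Y : {1,…,n} → R, evaluating q with δ_{i,x,y} = [X(i)=x and Y(i)=y] and ξ_{i,x} = [X(i)=x] gives a value in [0,1]; and (b) for each b ∈ {0,1}, the average over f ∈ P⁻¹(b) and X ∼ Δ of this evaluation of q at (X, f∘X) equals the average over f ∈ P⁻¹(b) and X ∼ Δ of p(δ_{X,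 f∘X}). -/
open MvPolynomial Finset

lemma my_eval_aeval {σ τ : Type*} (x : τ → ℝ) (g : σ → MvPolynomial τ ℝ)
    (p : MvPolynomial σ ℝ) :
    eval x (aeval g p) = eval (fun s => eval x (g s)) p := by
  rw [aeval_def, eval_eval₂]
  have h : ((eval x).comp (algebraMap ℝ (MvPolynomial τ ℝ))) = RingHom.id ℝ := by
    ext r; simp [MvPolynomial.algebraMap_eq]
  rw [h, eval₂_id]

lemma my_totalDegree_aeval_le {σ τ : Type*} (g : σ → MvPolynomial τ ℝ)
    (hg : ∀ s, (g s).totalDegree ≤ 1) (p : MvPolynomial σ ℝ) :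
    (aeval g p).totalDegree ≤ p.totalDegree := by
  rw [aeval_def, eval₂_eq]
  apply totalDegree_finsetSum_le
  intro m hm
  calc (algebraMap ℝ (MvPolynomial τ ℝ) (p.coeff m) * ∏ v ∈ m.support, g v ^ m v).totalDegree
      ≤ (algebraMap ℝ (MvPolynomial τ ℝ) (p.coeff m)).totalDegree
        + (∏ v ∈ m.support, g v ^ m v).totalDegree := totalDegree_mul _ _
    _ ≤ 0 + ∑ v ∈ m.support, m v := by
        apply add_le_add
        · simp [MvPolynomial.algebraMap_eq]
        · refine (totalDegree_finset_prod _ _).trans (Finset.sum_le_sum fun v hv => ?_)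
          calc (g v ^ m v).totalDegree ≤ m v * (g v).totalDegree := totalDegree_pow _ _
            _ ≤ m v * 1 := Nat.mul_le_mul_left _ (hg v)
            _ = m v := Nat.mul_one _
    _ ≤ p.totalDegree := by
        rw [zero_add]
        exact le_totalDegree hm

lemma my_pad_exists {γ : Type*} (A : Finset γ) (k : ℕ) (hk : A.card ≤ k) (hA : A.Nonempty) :
    ∃ e : Fin k → γ, (∀ j, e j ∈ A) ∧ (∀ a ∈ A, ∃ j, e j = a) := by
  obtain ⟨a0, ha0⟩ := hA
  refine ⟨fun j => if h : (j : ℕ) < A.toList.length then A.toList.get ⟨j, h⟩ else a0, ?_, ?_⟩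
  · intro j
    dsimp only
    split
    · exact Finset.mem_toList.1 (List.get_mem _ _)
    · exact ha0
  · intro a ha
    obtain ⟨i, hi⟩ := List.mem_iff_get.1 (Finset.mem_toList.2 ha)
    have hlt : (i : ℕ) < A.toList.length := i.2
    refine ⟨⟨i, lt_of_lt_of_le (by simpa [Finset.length_toList] using hlt) hk⟩, ?_⟩
    have : (i : ℕ) < A.card := by simpa [Finset.length_toList] using hlt
    simpa [this] using hi

lemma my_card_support_le {σ : Type*} (m : σ →₀ ℕ) : m.support.card ≤ m.sum fun _ e => e := by
  rw [Finsupp.sum, Finset.card_eq_sum_ones m.support]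
  exact Finset.sum_le_sum fun v hv => Nat.one_le_iff_ne_zero.2 (Finsupp.mem_support_iff.1 hv)

lemma my_key_count {D R : Type} [DecidableEq D] [DecidableEq R]
    (S : Finset D) (d : ℕ) (F : Finset (D → R)) (P : (D → R) → Fin 2)
    (hInd : ∀ (r : ℕ) (_ : r ≤ d)
        (zs : Fin r → D) (_ : ∀ j, zs j ∈ S)
        (zt : Fin (d - r) → D) (_ : ∀ j, zt j ∉ S)
        (ys : Fin r → R) (yt : Fin (d - r) → R) (b : Fin 2),
      (F.filter (fun f =>
          (∀ j, f (zt j) = yt j) ∧ (∀ j, f (zs j) = ys j) ∧ P f = b)).card * F.card =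
        (F.filter (fun f => ∀ j, f (zt j) = yt j)).card *
          (F.filter (fun f => (∀ j, f (zs j) = ys j) ∧ P f = b)).card)
    {γ : Type} (π : γ → D) (ρ : γ → R)
    (A B : Finset γ) (hA : ∀ v ∈ A, π v ∈ S) (hB : ∀ v ∈ B, π v ∉ S)
    (hcard : A.card + B.card ≤ d) (b : Fin 2) :
    (F.filter (fun f => (∀ v ∈ B, f (π v) = ρ v) ∧ (∀ v ∈ A, f (π v) = ρ v)
        ∧ P f = b)).card * F.card =
      (F.filter (fun f => ∀ v ∈ B, f (π v) = ρ v)).card *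
        (F.filter (fun f => (∀ v ∈ A, f (π v) = ρ v) ∧ P f = b)).card := by
  classical
  by_cases hBne : B.Nonempty
  · -- B nonempty : use hInd
    obtain ⟨r, hr, zs, hzs, ys, hiffA, hle⟩ :
        ∃ (r : ℕ) (_ : r ≤ d) (zs : Fin r → D) (_ : ∀ j, zs j ∈ S) (ys : Fin r → R),
          (∀ f : D → R, (∀ j, f (zs j) = ys j) ↔ ∀ v ∈ A, f (π v) = ρ v)
          ∧ B.card ≤ d - r := by
      by_cases hAne : A.Nonempty
      · have hAc : A.card ≤ d - B.card := by
          have := Finset.card_pos.2 hBne; omega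
        obtain ⟨e, heA, hecov⟩ := my_pad_exists A (d - B.card) hAc hAne
        refine ⟨d - B.card, by omega, fun j => π (e j), fun j => hA _ (heA j),
          fun j => ρ (e j), fun f => ?_, by omega⟩
        constructor
        · intro h v hv; obtain ⟨j, rfl⟩ := hecov v hv; exact h j
        · intro h j; exact h _ (heA j)
      · have hAe : A = ∅ := Finset.not_nonempty_iff_eq_empty.1 hAne
        refine ⟨0, Nat.zero_le d, Fin.elim0, fun j => j.elim0, Fin.elim0,
          fun f => ?_, by omega⟩
        simp [hAe]
    obtain ⟨e, heB, hecov⟩ := my_pad_exists B (d - r) hle hBne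
    have hiffB : ∀ f : D → R, (∀ j, f (π (e j)) = ρ (e j)) ↔ ∀ v ∈ B, f (π v) = ρ v := by
      intro f
      constructor
      · intro h v hv; obtain ⟨j, rfl⟩ := hecov v hv; exact h j
      · intro h j; exact h _ (heB j)
    have h := hInd r hr zs hzs (fun j => π (e j)) (fun j => hB _ (heB j))
      ys (fun j => ρ (e j)) b
    have g1 : F.filter (fun f => (∀ v ∈ B, f (π v) = ρ v) ∧ (∀ v ∈ A, f (π v) = ρ v)
          ∧ P f = b)
        = F.filter (fun f => (∀ j, f (π (e j)) = ρ (e j)) ∧ (∀ j, f (zs j) = ys j)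
          ∧ P f = b) :=
      Finset.filter_congr fun f _ => by rw [hiffB, hiffA]
    have g2 : F.filter (fun f => ∀ v ∈ B, f (π v) = ρ v)
        = F.filter (fun f => ∀ j, f (π (e j)) = ρ (e j)) :=
      Finset.filter_congr fun f _ => by rw [hiffB]
    have g3 : F.filter (fun f => (∀ v ∈ A, f (π v) = ρ v) ∧ P f = b)
        = F.filter (fun f => (∀ j, f (zs j) = ys j) ∧ P f = b) :=
      Finset.filter_congr fun f _ => by rw [hiffA]
    rw [g1, g2, g3]
    exact h
  · -- B empty : trivial
    have hBe : B = ∅ := Finset.not_nonempty_iff_eq_empty.1 hBne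
    subst hBe
    simp only [Finset.notMem_empty, false_implies, implies_true, true_and]
    rw [Finset.filter_true_of_mem (fun _ _ => trivial), Nat.mul_comm]

lemma my_ite_pow (c : Prop) (inst : Decidable c) {k : ℕ} (hk : k ≠ 0) :
    (@ite ℝ c inst 1 0) ^ k = @ite ℝ c inst 1 0 := by
  split_ifs
  · exact one_pow k
  · exact zero_pow hk

lemma my_ite_and_mul (a b : Prop) [Decidable a] [Decidable b] :
    (if a ∧ b then (1 : ℝ) else 0) = (if a then (1 : ℝ) else 0) * (if b then 1 else 0) := by
  by_cases ha : a <;> by_cases hb : b <;> simp [ha, hb]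

lemma my_core {D R : Type} [DecidableEq D] [DecidableEq R]
    (S : Finset D) (d : ℕ) (F : Finset (D → R)) (P : (D → R) → Fin 2)
    (hInd : ∀ (r : ℕ) (_ : r ≤ d)
        (zs : Fin r → D) (_ : ∀ j, zs j ∈ S)
        (zt : Fin (d - r) → D) (_ : ∀ j, zt j ∉ S)
        (ys : Fin r → R) (yt : Fin (d - r) → R) (b : Fin 2),
      (F.filter (fun f =>
          (∀ j, f (zt j) = yt j) ∧ (∀ j, f (zs j) = ys j) ∧ P f = b)).card * F.card =
        (F.filter (fun f => ∀ j, f (zt j) = yt j)).card *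
          (F.filter (fun f => (∀ j, f (zs j) = ys j) ∧ P f = b)).card)
    {n : ℕ} (p : MvPolynomial (Fin n × D × R) ℝ) (hdeg : p.totalDegree ≤ d)
    (X : Fin n → D) (b : Fin 2) :
    ∑ f ∈ F.filter (fun f => P f = b), ∑ f' ∈ F,
      MvPolynomial.eval (fun v => if X v.1 = v.2.1 ∧
        (if v.2.1 ∈ S then f v.2.1 else f' v.2.1) = v.2.2 then (1:ℝ) else 0) p
    = (F.card : ℝ) * ∑ f ∈ F.filter (fun f => P f = b),
      MvPolynomial.eval (fun v => if X v.1 = v.2.1 ∧ f v.2.1 = v.2.2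
        then (1:ℝ) else 0) p := by
  classical
  simp only [MvPolynomial.eval_eq]
  rw [show (∑ f ∈ F.filter (fun f => P f = b), ∑ f' ∈ F, ∑ m ∈ p.support,
        p.coeff m * ∏ v ∈ m.support, (if X v.1 = v.2.1 ∧
          (if v.2.1 ∈ S then f v.2.1 else f' v.2.1) = v.2.2 then (1:ℝ) else 0) ^ m v)
      = ∑ m ∈ p.support, ∑ f ∈ F.filter (fun f => P f = b), ∑ f' ∈ F,
        p.coeff m * ∏ v ∈ m.support, (if X v.1 = v.2.1 ∧
          (if v.2.1 ∈ S then f v.2.1 else f' v.2.1) = v.2.2 then (1:ℝ) else 0) ^ m v from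
    (Finset.sum_congr rfl fun f _ => Finset.sum_comm).trans Finset.sum_comm]
  rw [show (∑ f ∈ F.filter (fun f => P f = b), ∑ m ∈ p.support,
        p.coeff m * ∏ v ∈ m.support, (if X v.1 = v.2.1 ∧ f v.2.1 = v.2.2
          then (1:ℝ) else 0) ^ m v)
      = ∑ m ∈ p.support, ∑ f ∈ F.filter (fun f => P f = b),
        p.coeff m * ∏ v ∈ m.support, (if X v.1 = v.2.1 ∧ f v.2.1 = v.2.2
          then (1:ℝ) else 0) ^ m v from Finset.sum_comm]
  rw [Finset.mul_sum]
  refine Finset.sum_congr rfl fun m hm => ?_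
  -- remove the powers and turn products into booleans
  have hprodc : ∀ (c : (Fin n × D × R) → Prop) (inst : DecidablePred c),
      ∏ v ∈ m.support, (@ite ℝ (c v) (inst v) 1 0) ^ m v
        = if ∀ v ∈ m.support, c v then (1:ℝ) else 0 := by
    intro c inst
    rw [Finset.prod_congr rfl fun v hv =>
      my_ite_pow (c v) (inst v) (Finsupp.mem_support_iff.1 hv)]
    exact Finset.prod_boole
  suffices h : (∑ f ∈ F.filter (fun f => P f = b), ∑ f' ∈ F,
      (if ∀ v ∈ m.support, X v.1 = v.2.1 ∧
        (if v.2.1 ∈ S then f v.2.1 else f' v.2.1) = v.2.2 then (1:ℝ) else 0))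
      = (F.card : ℝ) * ∑ f ∈ F.filter (fun f => P f = b),
        (if ∀ v ∈ m.support, X v.1 = v.2.1 ∧ f v.2.1 = v.2.2 then (1:ℝ) else 0) by
    calc ∑ f ∈ F.filter (fun f => P f = b), ∑ f' ∈ F,
          p.coeff m * ∏ v ∈ m.support, (if X v.1 = v.2.1 ∧
            (if v.2.1 ∈ S then f v.2.1 else f' v.2.1) = v.2.2 then (1:ℝ) else 0) ^ m v
        = p.coeff m * ∑ f ∈ F.filter (fun f => P f = b), ∑ f' ∈ F,
          (if ∀ v ∈ m.support, X v.1 = v.2.1 ∧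
            (if v.2.1 ∈ S then f v.2.1 else f' v.2.1) = v.2.2 then (1:ℝ) else 0) := by
          rw [Finset.mul_sum]
          refine Finset.sum_congr rfl fun f _ => ?_
          rw [Finset.mul_sum]
          refine Finset.sum_congr rfl fun f' _ => ?_
          rw [hprodc _ _]
      _ = p.coeff m * ((F.card : ℝ) * ∑ f ∈ F.filter (fun f => P f = b),
          (if ∀ v ∈ m.support, X v.1 = v.2.1 ∧ f v.2.1 = v.2.2 then (1:ℝ) else 0)) := by
          rw [h]
      _ = (F.card : ℝ) * ∑ f ∈ F.filter (fun f => P f = b),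
          p.coeff m * ∏ v ∈ m.support, (if X v.1 = v.2.1 ∧ f v.2.1 = v.2.2
            then (1:ℝ) else 0) ^ m v := by
          rw [show (∑ f ∈ F.filter (fun f => P f = b), p.coeff m *
              ∏ v ∈ m.support, (if X v.1 = v.2.1 ∧ f v.2.1 = v.2.2
                then (1:ℝ) else 0) ^ m v)
            = ∑ f ∈ F.filter (fun f => P f = b), p.coeff m *
              (if ∀ v ∈ m.support, X v.1 = v.2.1 ∧ f v.2.1 = v.2.2 then (1:ℝ) else 0)
            from Finset.sum_congr rfl fun f _ => by rw [hprodc _ _]]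
          rw [← Finset.mul_sum]
          ring
  by_cases hX : ∀ v ∈ m.support, X v.1 = v.2.1
  · -- main case
    have hcongr1 : ∀ f f' : D → R,
        (if ∀ v ∈ m.support, X v.1 = v.2.1 ∧
          (if v.2.1 ∈ S then f v.2.1 else f' v.2.1) = v.2.2 then (1:ℝ) else 0)
        = (if ∀ v ∈ m.support.filter (fun v => v.2.1 ∈ S), f v.2.1 = v.2.2
            then (1:ℝ) else 0) *
          (if ∀ v ∈ m.support.filter (fun v => v.2.1 ∉ S), f' v.2.1 = v.2.2
            then (1:ℝ) else 0) := by
      intro f f'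
      rw [← my_ite_and_mul]
      refine if_congr ?_ rfl rfl
      constructor
      · intro h
        constructor
        · intro v hv
          obtain ⟨hv1, hv2⟩ := Finset.mem_filter.1 hv
          have := (h v hv1).2
          rwa [if_pos hv2] at this
        · intro v hv
          obtain ⟨hv1, hv2⟩ := Finset.mem_filter.1 hv
          have := (h v hv1).2
          rwa [if_neg hv2] at this
      · rintro ⟨h1, h2⟩ v hv
        refine ⟨hX v hv, ?_⟩
        by_cases hvS : v.2.1 ∈ S
        · rw [if_pos hvS]; exact h1 v (Finset.mem_filter.2 ⟨hv, hvS⟩)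
        · rw [if_neg hvS]; exact h2 v (Finset.mem_filter.2 ⟨hv, hvS⟩)
    have hcongr2 : ∀ f : D → R,
        (if ∀ v ∈ m.support, X v.1 = v.2.1 ∧ f v.2.1 = v.2.2 then (1:ℝ) else 0)
        = (if (∀ v ∈ m.support.filter (fun v => v.2.1 ∉ S), f v.2.1 = v.2.2)
            ∧ (∀ v ∈ m.support.filter (fun v => v.2.1 ∈ S), f v.2.1 = v.2.2)
            then (1:ℝ) else 0) := by
      intro f
      refine if_congr ?_ rfl rfl
      constructor
      · intro h
        exact ⟨fun v hv => (h v (Finset.mem_filter.1 hv).1).2,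
          fun v hv => (h v (Finset.mem_filter.1 hv).1).2⟩
      · rintro ⟨h1, h2⟩ v hv
        refine ⟨hX v hv, ?_⟩
        by_cases hvS : v.2.1 ∈ S
        · exact h2 v (Finset.mem_filter.2 ⟨hv, hvS⟩)
        · exact h1 v (Finset.mem_filter.2 ⟨hv, hvS⟩)
    simp only [hcongr1, hcongr2]
    rw [Finset.sum_congr rfl fun f _ => (Finset.mul_sum _ _ _).symm.trans rfl]
    -- now compute the sums as cardinalities
    have hBcard : ∑ f' ∈ F, (if ∀ v ∈ m.support.filter (fun v => v.2.1 ∉ S),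
        f' v.2.1 = v.2.2 then (1:ℝ) else 0)
        = ((F.filter (fun f' => ∀ v ∈ m.support.filter (fun v => v.2.1 ∉ S),
            f' v.2.1 = v.2.2)).card : ℝ) := Finset.sum_boole _ _
    simp only [← Finset.mul_sum, hBcard]
    rw [← Finset.sum_mul, Finset.sum_boole, Finset.sum_boole]
    -- apply the key counting identity
    have hcard : (m.support.filter (fun v => v.2.1 ∈ S)).card
        + (m.support.filter (fun v => v.2.1 ∉ S)).card ≤ d := by
      rw [Finset.card_filter_add_card_filter_not]
      exact le_trans (my_card_support_le m) (le_trans (MvPolynomial.le_totalDegree hm) hdeg)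
    have key := my_key_count S d F P hInd (fun v : Fin n × D × R => v.2.1)
      (fun v => v.2.2) (m.support.filter (fun v => v.2.1 ∈ S))
      (m.support.filter (fun v => v.2.1 ∉ S))
      (fun v hv => (Finset.mem_filter.1 hv).2) (fun v hv => (Finset.mem_filter.1 hv).2)
      hcard b
    have e1 : (F.filter (fun f => P f = b)).filter
        (fun f => ∀ v ∈ m.support.filter (fun v => v.2.1 ∈ S), f v.2.1 = v.2.2)
        = F.filter (fun f => (∀ v ∈ m.support.filter (fun v => v.2.1 ∈ S),
            f v.2.1 = v.2.2) ∧ P f = b) := by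
      rw [Finset.filter_filter]
      exact Finset.filter_congr fun f _ => by tauto
    have e2 : (F.filter (fun f => P f = b)).filter
        (fun f => (∀ v ∈ m.support.filter (fun v => v.2.1 ∉ S), f v.2.1 = v.2.2)
          ∧ (∀ v ∈ m.support.filter (fun v => v.2.1 ∈ S), f v.2.1 = v.2.2))
        = F.filter (fun f => (∀ v ∈ m.support.filter (fun v => v.2.1 ∉ S),
            f v.2.1 = v.2.2) ∧ (∀ v ∈ m.support.filter (fun v => v.2.1 ∈ S),
            f v.2.1 = v.2.2) ∧ P f = b) := by
      rw [Finset.filter_filter]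
      exact Finset.filter_congr fun f _ => by tauto
    rw [e1, e2]
    have keyn : (F.filter (fun f => (∀ v ∈ m.support.filter (fun v => v.2.1 ∈ S),
          f v.2.1 = v.2.2) ∧ P f = b)).card
        * (F.filter (fun f' => ∀ v ∈ m.support.filter (fun v => v.2.1 ∉ S),
          f' v.2.1 = v.2.2)).card
        = F.card * (F.filter (fun f => (∀ v ∈ m.support.filter (fun v => v.2.1 ∉ S),
          f v.2.1 = v.2.2) ∧ (∀ v ∈ m.support.filter (fun v => v.2.1 ∈ S),
          f v.2.1 = v.2.2) ∧ P f = b)).card := by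
      rw [Nat.mul_comm, ← key, Nat.mul_comm]
    exact_mod_cast keyn
  · -- degenerate case: some X v.1 ≠ v.2.1, all indicators vanish
    have hz : ∀ (c : (Fin n × D × R) → Prop) (inst : DecidablePred c),
        (if ∀ v ∈ m.support, X v.1 = v.2.1 ∧ c v then (1:ℝ) else 0) = 0 := by
      intro c inst
      rw [if_neg]
      intro h
      exact hX fun v hv => (h v hv).1
    simp only [hz]
    simp

noncomputable def mySub {D R : Type} [DecidableEq D] [DecidableEq R] (S : Finset D) (n : ℕ)
    (g : {x : D // x ∉ S} → R) (v : Fin n × D × R) :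
    MvPolynomial ((Fin n × {x : D // x ∈ S} × R) ⊕ (Fin n × {x : D // x ∉ S})) ℝ :=
  if h : v.2.1 ∈ S then MvPolynomial.X (Sum.inl (v.1, ⟨v.2.1, h⟩, v.2.2))
  else if g ⟨v.2.1, h⟩ = v.2.2 then MvPolynomial.X (Sum.inr (v.1, ⟨v.2.1, h⟩)) else 0

lemma mySub_deg {D R : Type} [DecidableEq D] [DecidableEq R] (S : Finset D) (n : ℕ)
    (g : {x : D // x ∉ S} → R) (v : Fin n × D × R) :
    (mySub S n g v).totalDegree ≤ 1 := by
  unfold mySub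
  split_ifs <;> simp [MvPolynomial.totalDegree_X]

lemma mySub_eval {D R : Type} [DecidableEq D] [DecidableEq R] (S : Finset D) (n : ℕ)
    (g : {x : D // x ∉ S} → R) (X : Fin n → D) (Y : Fin n → R) (v : Fin n × D × R) :
    MvPolynomial.eval (Sum.elim
        (fun v : Fin n × {x : D // x ∈ S} × R =>
          if X v.1 = (v.2.1 : D) ∧ Y v.1 = v.2.2 then (1 : ℝ) else 0)
        (fun v : Fin n × {x : D // x ∉ S} =>
          if X v.1 = (v.2 : D) then (1 : ℝ) else 0)) (mySub S n g v)
      = if X v.1 = v.2.1 ∧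
          (if h : X v.1 ∈ S then Y v.1 else g ⟨X v.1, h⟩) = v.2.2 then (1 : ℝ) else 0 := by
  unfold mySub
  by_cases h : v.2.1 ∈ S <;> by_cases hx : X v.1 = v.2.1
  · simp [h, hx]
  · simp [h, hx]
  · simp only [dif_neg h, hx]
    by_cases hg : g ⟨v.2.1, h⟩ = v.2.2 <;> simp [hg, hx, h]
  · simp only [dif_neg h]
    by_cases hg : g ⟨v.2.1, h⟩ = v.2.2 <;> simp [hg, hx]

open Classical in
noncomputable def myW {D R : Type} [DecidableEq D] [DecidableEq R] (S : Finset D)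
    (F : Finset (D → R)) (g : {x : D // x ∉ S} → R) : ℝ :=
  ((F.filter (fun f : D → R => (fun x : {x : D // x ∉ S} => f x.1) = g)).card : ℝ) / F.card

lemma mySub_eval_comb {D R : Type} [DecidableEq D] [DecidableEq R] (S : Finset D) (n : ℕ)
    (g : {x : D // x ∉ S} → R) (X : Fin n → D) (f f' : D → R)
    (hf' : ∀ x : {x : D // x ∉ S}, f' x = g x) (v : Fin n × D × R) :
    MvPolynomial.eval (Sum.elim
        (fun v : Fin n × {x : D // x ∈ S} × R =>
          if X v.1 = (v.2.1 : D) ∧ f (X v.1) = v.2.2 then (1 : ℝ) else 0)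
        (fun v : Fin n × {x : D // x ∉ S} =>
          if X v.1 = (v.2 : D) then (1 : ℝ) else 0)) (mySub S n g v)
      = if X v.1 = v.2.1 ∧
          (if v.2.1 ∈ S then f v.2.1 else f' v.2.1) = v.2.2 then (1 : ℝ) else 0 := by
  unfold mySub
  by_cases h : v.2.1 ∈ S <;> by_cases hx : X v.1 = v.2.1
  · simp [h, hx]
  · simp [h, hx]
  · have hfg : f' v.2.1 = g ⟨v.2.1, h⟩ := hf' ⟨v.2.1, h⟩
    simp only [dif_neg h]
    by_cases hg : g ⟨v.2.1, h⟩ = v.2.2 <;> simp [h, hx, hg, hfg]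
  · have hfg : f' v.2.1 = g ⟨v.2.1, h⟩ := hf' ⟨v.2.1, h⟩
    simp only [dif_neg h]
    by_cases hg : g ⟨v.2.1, h⟩ = v.2.2 <;> simp [h, hx, hg, hfg]

set_option maxHeartbeats 1000000 in
/-- Given a `(d,S)`-independent property `P`, a permutation-independent
distribution `Δ` on bijections `Fin n ≃ D`, and a real polynomial `p` in variables
indexed by `Fin n × D × R` of total degree at most `d` bounded in `[0,1]` on all
encodings `δ_{X,Y}`, there is a polynomial `q` of no larger total degree in the
variables `δ_{i,x,y}` for `x ∈ S` together with `ξ_{i,x}` for `x ∉ S` such that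
(a) `q` is bounded in `[0,1]` on all encodings and (b) for each `b ∈ {0,1}`, `q` and
`p` have the same average over `f ∈ P⁻¹ b` and `X ∼ Δ`. -/
theorem stmt4 {D R : Type} [Fintype D] [Fintype R] [DecidableEq D] [DecidableEq R]
    [Nonempty D] [Nonempty R]
    (n : ℕ) (hn : Fintype.card D = n)
    (S : Finset D) (d : ℕ)
    (F : Finset (D → R)) (hF : F.Nonempty)
    (P : (D → R) → Fin 2)
    (hP0 : (F.filter (fun f => P f = 0)).Nonempty)
    (hP1 : (F.filter (fun f => P f = 1)).Nonempty)
    (hInd : ∀ (r : ℕ) (_ : r ≤ d)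
        (zs : Fin r → D) (_ : ∀ j, zs j ∈ S)
        (zt : Fin (d - r) → D) (_ : ∀ j, zt j ∉ S)
        (ys : Fin r → R) (yt : Fin (d - r) → R) (b : Fin 2),
      (F.filter (fun f =>
          (∀ j, f (zt j) = yt j) ∧ (∀ j, f (zs j) = ys j) ∧ P f = b)).card
          * F.card =
        (F.filter (fun f => ∀ j, f (zt j) = yt j)).card *
          (F.filter (fun f => (∀ j, f (zs j) = ys j) ∧ P f = b)).card)
    (Δ : (Fin n ≃ D) → ℝ)
    (hΔ0 : ∀ X, 0 ≤ Δ X) (hΔ1 : ∑ X : Fin n ≃ D, Δ X = 1)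
    (hΔperm : ∀ (σ : Equiv.Perm D) (X : Fin n ≃ D), Δ (X.trans σ) = Δ X)
    (p : MvPolynomial (Fin n × D × R) ℝ)
    (hdeg : p.totalDegree ≤ d)
    (hbd : ∀ (X : Fin n → D) (Y : Fin n → R),
      0 ≤ MvPolynomial.eval
          (fun v => if X v.1 = v.2.1 ∧ Y v.1 = v.2.2 then (1 : ℝ) else 0) p ∧
        MvPolynomial.eval
          (fun v => if X v.1 = v.2.1 ∧ Y v.1 = v.2.2 then (1 : ℝ) else 0) p ≤ 1) :
    ∃ q : MvPolynomial
        ((Fin n × {x : D // x ∈ S} × R) ⊕ (Fin n × {x : D // x ∉ S})) ℝ,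
      q.totalDegree ≤ p.totalDegree ∧
      -- (a): q is bounded in [0,1] on every encoding of a pair (X, Y)
      (∀ (X : Fin n → D) (Y : Fin n → R),
        0 ≤ MvPolynomial.eval
            (Sum.elim
              (fun v => if X v.1 = (v.2.1 : D) ∧ Y v.1 = v.2.2 then (1 : ℝ) else 0)
              (fun v => if X v.1 = (v.2 : D) then (1 : ℝ) else 0)) q ∧
          MvPolynomial.eval
            (Sum.elim
              (fun v => if X v.1 = (v.2.1 : D) ∧ Y v.1 = v.2.2 then (1 : ℝ) else 0)
              (fun v => if X v.1 = (v.2 : D) then (1 : ℝ) else 0)) q ≤ 1) ∧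
      -- (b): q and p have the same average over f ∈ P⁻¹(b) and X ∼ Δ
      (∀ b : Fin 2,
        (1 / ((F.filter (fun f => P f = b)).card : ℝ)) *
            ∑ f ∈ F.filter (fun f => P f = b), ∑ X : Fin n ≃ D, Δ X *
              MvPolynomial.eval
                (Sum.elim
                  (fun v => if X v.1 = (v.2.1 : D) ∧ f (X v.1) = v.2.2
                    then (1 : ℝ) else 0)
                  (fun v => if X v.1 = (v.2 : D) then (1 : ℝ) else 0)) q =
        (1 / ((F.filter (fun f => P f = b)).card : ℝ)) *
            ∑ f ∈ F.filter (fun f => P f = b), ∑ X : Fin n ≃ D, Δ X *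
              MvPolynomial.eval
                (fun v => if X v.1 = v.2.1 ∧ f (X v.1) = v.2.2 then (1 : ℝ) else 0)
                p) := by
  
  classical
  have hFc : (0:ℝ) < (F.card : ℝ) := by exact_mod_cast hF.card_pos
  have hnat : ∑ g : {x : D // x ∉ S} → R,
      (F.filter (fun f => (fun x : {x : D // x ∉ S} => f x.1) = g)).card = F.card :=
    (Finset.card_eq_sum_card_fiberwise (fun f _ => Finset.mem_univ _)).symm
  obtain ⟨w, hw0, hw1, hwcard⟩ : ∃ w : ({x : D // x ∉ S} → R) → ℝ,
      (∀ g, 0 ≤ w g) ∧ (∑ g : {x : D // x ∉ S} → R, w g = 1) ∧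
      ∀ g, w g * (F.card : ℝ)
        = ((F.filter (fun f => (fun x : {x : D // x ∉ S} => f x.1) = g)).card : ℝ) := by
    refine ⟨fun g => ((F.filter
        (fun f => (fun x : {x : D // x ∉ S} => f x.1) = g)).card : ℝ) / F.card,
      fun g => div_nonneg (Nat.cast_nonneg _) hFc.le, ?_, fun g => ?_⟩
    · rw [← Finset.sum_div, ← Nat.cast_sum, hnat, div_self hFc.ne']
    · rw [div_mul_cancel₀ _ hFc.ne']
  refine ⟨∑ g : {x : D // x ∉ S} → R,
    MvPolynomial.C (w g) * MvPolynomial.aeval (mySub S n g) p, ?_, ?_, ?_⟩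
  · -- degree bound
    apply MvPolynomial.totalDegree_finsetSum_le
    intro g _
    calc (MvPolynomial.C (w g) * MvPolynomial.aeval (mySub S n g) p).totalDegree
        ≤ (MvPolynomial.C (w g) : MvPolynomial _ ℝ).totalDegree
          + (MvPolynomial.aeval (mySub S n g) p).totalDegree :=
          MvPolynomial.totalDegree_mul _ _
      _ ≤ 0 + p.totalDegree := add_le_add (le_of_eq (MvPolynomial.totalDegree_C _))
          (my_totalDegree_aeval_le _ (mySub_deg S n g) p)
      _ = p.totalDegree := zero_add _
  · -- boundedness
    intro X Y
    rw [map_sum]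
    have hval : ∀ g : {x : D // x ∉ S} → R,
        MvPolynomial.eval (Sum.elim
          (fun v : Fin n × {x : D // x ∈ S} × R =>
            if X v.1 = (v.2.1 : D) ∧ Y v.1 = v.2.2 then (1 : ℝ) else 0)
          (fun v : Fin n × {x : D // x ∉ S} =>
            if X v.1 = (v.2 : D) then (1 : ℝ) else 0))
          (MvPolynomial.C (w g) * MvPolynomial.aeval (mySub S n g) p)
        = w g * MvPolynomial.eval (fun v => if X v.1 = v.2.1 ∧
            (if h : X v.1 ∈ S then Y v.1 else g ⟨X v.1, h⟩) = v.2.2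
            then (1 : ℝ) else 0) p := by
      intro g
      rw [MvPolynomial.eval_mul, MvPolynomial.eval_C, my_eval_aeval]
      exact congrArg (fun z => w g * MvPolynomial.eval z p)
        (funext fun v => mySub_eval S n g X Y v)
    constructor
    · refine Finset.sum_nonneg fun g _ => ?_
      rw [hval g]
      exact mul_nonneg (hw0 g)
        (hbd X (fun i => if h : X i ∈ S then Y i else g ⟨X i, h⟩)).1
    · refine le_trans (Finset.sum_le_sum fun g _ => ?_) hw1.le
      rw [hval g]
      exact mul_le_of_le_one_right (hw0 g)
        (hbd X (fun i => if h : X i ∈ S then Y i else g ⟨X i, h⟩)).2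
  · -- equal averages
    intro b
    congr 1
    rw [Finset.sum_comm (s := F.filter (fun f => P f = b)) (t := Finset.univ),
      Finset.sum_comm (s := F.filter (fun f => P f = b)) (t := Finset.univ)]
    refine Finset.sum_congr rfl fun X _ => ?_
    rw [← Finset.mul_sum, ← Finset.mul_sum]
    congr 1
    have hterm : ∀ (f : D → R) (g : {x : D // x ∉ S} → R) (f' : D → R)
        (_ : ∀ x : {x : D // x ∉ S}, f' x.1 = g x),
        MvPolynomial.eval (Sum.elim
          (fun v : Fin n × {x : D // x ∈ S} × R =>
            if X v.1 = (v.2.1 : D) ∧ f (X v.1) = v.2.2 then (1 : ℝ) else 0)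
          (fun v : Fin n × {x : D // x ∉ S} =>
            if X v.1 = (v.2 : D) then (1 : ℝ) else 0))
          (MvPolynomial.aeval (mySub S n g) p)
        = MvPolynomial.eval (fun v => if X v.1 = v.2.1 ∧
            (if v.2.1 ∈ S then f v.2.1 else f' v.2.1) = v.2.2 then (1 : ℝ) else 0) p := by
      intro f g f' hf'
      rw [my_eval_aeval]
      exact congrArg (fun z => MvPolynomial.eval z p)
        (funext fun v => mySub_eval_comb S n g (⇑X) f f' hf' v)
    calc ∑ f ∈ F.filter (fun f => P f = b),
          MvPolynomial.eval (Sum.elim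
            (fun v : Fin n × {x : D // x ∈ S} × R =>
              if X v.1 = (v.2.1 : D) ∧ f (X v.1) = v.2.2 then (1 : ℝ) else 0)
            (fun v : Fin n × {x : D // x ∉ S} =>
              if X v.1 = (v.2 : D) then (1 : ℝ) else 0))
            (∑ g : {x : D // x ∉ S} → R,
              MvPolynomial.C (w g) * MvPolynomial.aeval (mySub S n g) p)
        = ∑ f ∈ F.filter (fun f => P f = b), (1 / (F.card : ℝ)) * ∑ f' ∈ F,
            MvPolynomial.eval (fun v => if X v.1 = v.2.1 ∧
              (if v.2.1 ∈ S then f v.2.1 else f' v.2.1) = v.2.2 then (1 : ℝ) else 0) p := by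
          refine Finset.sum_congr rfl fun f _ => ?_
          rw [map_sum]
          rw [show (∑ f' ∈ F, MvPolynomial.eval (fun v => if X v.1 = v.2.1 ∧
                (if v.2.1 ∈ S then f v.2.1 else f' v.2.1) = v.2.2 then (1 : ℝ) else 0) p)
              = ∑ g : {x : D // x ∉ S} → R,
                ∑ f' ∈ F.filter (fun f' => (fun x : {x : D // x ∉ S} => f' x.1) = g),
                MvPolynomial.eval (fun v => if X v.1 = v.2.1 ∧
                  (if v.2.1 ∈ S then f v.2.1 else f' v.2.1) = v.2.2
                  then (1 : ℝ) else 0) p from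
            (Finset.sum_fiberwise_of_maps_to (fun f' _ => Finset.mem_univ _) _).symm]
          rw [Finset.mul_sum]
          refine Finset.sum_congr rfl fun g _ => ?_
          rw [MvPolynomial.eval_mul, MvPolynomial.eval_C]
          have hconst : ∑ f' ∈ F.filter
                (fun f' => (fun x : {x : D // x ∉ S} => f' x.1) = g),
              MvPolynomial.eval (fun v => if X v.1 = v.2.1 ∧
                (if v.2.1 ∈ S then f v.2.1 else f' v.2.1) = v.2.2 then (1 : ℝ) else 0) p
              = ∑ f' ∈ F.filter
                (fun f' => (fun x : {x : D // x ∉ S} => f' x.1) = g),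
              MvPolynomial.eval (Sum.elim
                (fun v : Fin n × {x : D // x ∈ S} × R =>
                  if X v.1 = (v.2.1 : D) ∧ f (X v.1) = v.2.2 then (1 : ℝ) else 0)
                (fun v : Fin n × {x : D // x ∉ S} =>
                  if X v.1 = (v.2 : D) then (1 : ℝ) else 0))
                (MvPolynomial.aeval (mySub S n g) p) := by
            refine Finset.sum_congr rfl fun f' hf' => ?_
            exact (hterm f g f'
              (fun x => congrFun (Finset.mem_filter.1 hf').2 x)).symm
          rw [hconst, Finset.sum_const, nsmul_eq_mul, ← hwcard g]
          field_simp
      _ = (1 / (F.card : ℝ)) * ∑ f ∈ F.filter (fun f => P f = b), ∑ f' ∈ F,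
            MvPolynomial.eval (fun v => if X v.1 = v.2.1 ∧
              (if v.2.1 ∈ S then f v.2.1 else f' v.2.1) = v.2.2 then (1 : ℝ) else 0) p := by
          rw [Finset.mul_sum]
      _ = (1 / (F.card : ℝ)) * ((F.card : ℝ) * ∑ f ∈ F.filter (fun f => P f = b),
            MvPolynomial.eval (fun v => if X v.1 = v.2.1 ∧ f v.2.1 = v.2.2
              then (1 : ℝ) else 0) p) := by
          rw [my_core S d F P hInd p hdeg (⇑X) b]
      _ = ∑ f ∈ F.filter (fun f => P f = b),
            MvPolynomial.eval (fun v => if X v.1 = v.2.1 ∧ f (X v.1) = v.2.2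
              then (1 : ℝ) else 0) p := by
          rw [← mul_assoc, one_div, inv_mul_cancel₀ hFc.ne', one_mul]
          refine Finset.sum_congr rfl fun f _ => ?_
          exact congrArg (fun z => MvPolynomial.eval z p) (funext fun v =>
            if_congr (and_congr_right fun hx => by rw [hx]) rfl rfl)
end

section
/- Let M, M' ≥ 1 be integers and 0 < ε ≤ 1/2. Let Q be a real polynomial in two variables such that 0 ≤ Q(α, β) ≤ 1 for all integers α, β with 0 ≤ α ≤ M and 0 ≤ β ≤ M', and suppose Q(1,0) ≤ 1/2 − ε and Q(0,1) ≥ 1/2 + ε. Then there exists a real polynomial q̂ in one variable, of degree at most the total degree of Q, such that 0 ≤ q̂(i) ≤ 1 for all integers i with 0 ≤ i ≤ min(M, M'), and |q̂(1) − q̂(0)| ≥ ε. -/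
lemma eval_aeval_if (Q : MvPolynomial (Fin 2) ℝ) (f : Fin 2 → Polynomial ℝ) (t : ℝ) :
    (MvPolynomial.aeval f Q).eval t
      = MvPolynomial.eval (fun i => (f i).eval t) Q := by
  have := MvPolynomial.eval₂_comp_left (Polynomial.evalRingHom t)
    (algebraMap ℝ (Polynomial ℝ)) f Q
  rw [MvPolynomial.aeval_def]
  rw [show (MvPolynomial.eval₂ (algebraMap ℝ (Polynomial ℝ)) f Q).eval t
    = Polynomial.evalRingHom t (MvPolynomial.eval₂ (algebraMap ℝ (Polynomial ℝ)) f Q) from rfl,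
    this]
  rw [MvPolynomial.eval]
  congr 1
  ext x
  simp


lemma mveval_congr (Q : MvPolynomial (Fin 2) ℝ) (g g' : Fin 2 → ℝ)
    (h : ∀ j, g j = g' j) :
    MvPolynomial.eval g Q = MvPolynomial.eval g' Q := by
  rw [funext h]

/-- Let `M, M' ≥ 1` and `0 < ε ≤ 1/2`. If `Q` is a real polynomial in two
variables with `0 ≤ Q(α,β) ≤ 1` for all integers `0 ≤ α ≤ M`, `0 ≤ β ≤ M'`, and
`Q(1,0) ≤ 1/2 − ε`, `Q(0,1) ≥ 1/2 + ε`, then there is a real univariate polynomial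
`q̂`, of degree at most the total degree of `Q`, with `0 ≤ q̂(i) ≤ 1` for all integers
`0 ≤ i ≤ min M M'` and `|q̂(1) − q̂(0)| ≥ ε`. -/
theorem stmt7 (M M' : ℕ) (hM : 1 ≤ M) (hM' : 1 ≤ M')
    (ε : ℝ) (hε0 : 0 < ε) (hε1 : ε ≤ 1 / 2)
    (Q : MvPolynomial (Fin 2) ℝ)
    (hbd : ∀ α β : ℕ, α ≤ M → β ≤ M' →
      0 ≤ MvPolynomial.eval (fun i => if i = 0 then (α : ℝ) else (β : ℝ)) Q ∧
        MvPolynomial.eval (fun i => if i = 0 then (α : ℝ) else (β : ℝ)) Q ≤ 1)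
    (h10 : MvPolynomial.eval (fun i => if i = 0 then (1 : ℝ) else 0) Q ≤ 1 / 2 - ε)
    (h01 : 1 / 2 + ε ≤ MvPolynomial.eval (fun i => if i = 0 then (0 : ℝ) else 1) Q) :
    ∃ qhat : Polynomial ℝ,
      qhat.natDegree ≤ Q.totalDegree ∧
      (∀ i : ℕ, i ≤ min M M' →
        0 ≤ qhat.eval (i : ℝ) ∧ qhat.eval (i : ℝ) ≤ 1) ∧
      ε ≤ |qhat.eval 1 - qhat.eval 0| := by
  by_cases hc : (1:ℝ)/2 ≤ MvPolynomial.eval (fun i => if i = 0 then (0 : ℝ) else 0) Q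
  · -- use q̂(t) = Q(t, 0)
    set f : Fin 2 → Polynomial ℝ := fun i => if i = 0 then Polynomial.X else 0 with hf
    refine ⟨MvPolynomial.aeval f Q, ?_, ?_, ?_⟩
    · have := MvPolynomial.aeval_natDegree_le Q le_rfl f (n := 1) ?_
      · simpa using this
      · intro i
        by_cases h : i = 0 <;> simp [hf, h]
    · intro i hi
      have h1 : (MvPolynomial.aeval f Q).eval (i:ℝ)
          = MvPolynomial.eval (fun j => if j = 0 then (i : ℝ) else ((0:ℕ) : ℝ)) Q := by
        rw [eval_aeval_if]
        exact mveval_congr Q _ _ (fun j => by by_cases h : j = 0 <;> simp [hf, h])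
      rw [h1]
      exact hbd i 0 (le_trans hi (min_le_left _ _)) (Nat.zero_le _)
    · have h1 : (MvPolynomial.aeval f Q).eval (1:ℝ)
          = MvPolynomial.eval (fun j => if j = 0 then (1 : ℝ) else 0) Q := by
        rw [eval_aeval_if]; exact mveval_congr Q _ _ (fun j => by by_cases h : j = 0 <;> simp [hf, h])
      have h0 : (MvPolynomial.aeval f Q).eval (0:ℝ)
          = MvPolynomial.eval (fun j => if j = 0 then (0 : ℝ) else 0) Q := by
        rw [eval_aeval_if]; exact mveval_congr Q _ _ (fun j => by by_cases h : j = 0 <;> simp [hf, h])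
      rw [h1, h0, abs_sub_comm]
      rw [abs_of_nonneg (by linarith)]
      linarith
  · -- use q̂(t) = Q(0, t)
    push_neg at hc
    set f : Fin 2 → Polynomial ℝ := fun i => if i = 0 then 0 else Polynomial.X with hf
    refine ⟨MvPolynomial.aeval f Q, ?_, ?_, ?_⟩
    · have := MvPolynomial.aeval_natDegree_le Q le_rfl f (n := 1) ?_
      · simpa using this
      · intro i
        by_cases h : i = 0 <;> simp [hf, h]
    · intro i hi
      have h1 : (MvPolynomial.aeval f Q).eval (i:ℝ)
          = MvPolynomial.eval (fun j => if j = 0 then ((0:ℕ) : ℝ) else (i : ℝ)) Q := by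
        rw [eval_aeval_if]
        exact mveval_congr Q _ _ (fun j => by by_cases h : j = 0 <;> simp [hf, h])
      rw [h1]
      exact hbd 0 i (Nat.zero_le _) (le_trans hi (min_le_right _ _))
    · have h1 : (MvPolynomial.aeval f Q).eval (1:ℝ)
          = MvPolynomial.eval (fun j => if j = 0 then (0 : ℝ) else 1) Q := by
        rw [eval_aeval_if]; exact mveval_congr Q _ _ (fun j => by by_cases h : j = 0 <;> simp [hf, h])
      have h0 : (MvPolynomial.aeval f Q).eval (0:ℝ)
          = MvPolynomial.eval (fun j => if j = 0 then (0 : ℝ) else 0) Q := by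
        rw [eval_aeval_if]; exact mveval_congr Q _ _ (fun j => by by_cases h : j = 0 <;> simp [hf, h])
      rw [h1, h0]
      rw [abs_of_nonneg (by linarith)]
      linarith
end

section
/- For every ε > 0 there is a constant c > 0 (depending only on ε) such that for every integer N ≥ 1 the following holds: if q̂ is a real polynomial in one variable with 0 ≤ q̂(i) ≤ 1 for every integer i with 0 ≤ i ≤ N, and |q̂(1) − q̂(0)| ≥ ε, then the degree of q̂ is at least c·√N. -/
open Finset Nat

lemma pat_prod_Icc_id (d : ℕ) : (∏ i ∈ Icc 1 d, i) = d ! := by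
  induction d with
  | zero => simp
  | succ d ih => rw [Finset.prod_Icc_succ_top (by omega), ih, Nat.factorial_succ, mul_comm]

lemma pat_fact_sq_le (d j : ℕ) (hj : j ≤ d) : d ! * d ! ≤ (d + j)! * (d - j)! := by
  have h1 : (2*d).choose (d+j) ≤ (2*d).choose d := by
    have := Nat.choose_le_middle (d+j) (2*d)
    rwa [Nat.mul_div_cancel_left d (by norm_num)] at this
  have e1 : (2*d).choose (d+j) * (d+j)! * (d-j)! = (2*d)! := by
    have := Nat.choose_mul_factorial_mul_factorial (n := 2*d) (k := d+j) (by omega)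
    have h2 : 2*d - (d+j) = d - j := by omega
    rwa [h2] at this
  have e2 : (2*d).choose d * d ! * d ! = (2*d)! := by
    have := Nat.choose_mul_factorial_mul_factorial (n := 2*d) (k := d) (by omega)
    have h2 : 2*d - d = d := by omega
    rwa [h2] at this
  have hcp : 0 < (2*d).choose d := Nat.choose_pos (by omega)
  have key : (2*d).choose d * (d ! * d !) ≤ (2*d).choose d * ((d+j)! * (d-j)!) := by
    calc (2*d).choose d * (d ! * d !) = (2*d).choose d * d ! * d ! := by ring
    _ = (2*d)! := e2
    _ = (2*d).choose (d+j) * (d+j)! * (d-j)! := e1.symm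
    _ ≤ (2*d).choose d * (d+j)! * (d-j)! := by
        exact Nat.mul_le_mul_right _ (Nat.mul_le_mul_right _ h1)
    _ = (2*d).choose d * ((d+j)! * (d-j)!) := by ring
  exact Nat.le_of_mul_le_mul_left key hcp

lemma pat_prod_erase_id (d j : ℕ) (hj1 : 1 ≤ j) (hjd : j ≤ d) :
    (j * ∏ i ∈ (Icc 1 d).erase j, i) = d ! := by
  rw [← pat_prod_Icc_id d]
  simpa using Finset.mul_prod_erase (Icc 1 d) (fun i => i) (by simp [mem_Icc]; omega : j ∈ Icc 1 d)

lemma pat_prod_add_shift (j d : ℕ) : (j ! * ∏ i ∈ Icc 1 d, (i + j)) = (d + j)! := by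
  induction d with
  | zero => simp
  | succ d ih =>
    rw [Finset.prod_Icc_succ_top (by omega), ← mul_assoc, ih]
    have : d + 1 + j = (d + j) + 1 := by omega
    rw [this, Nat.factorial_succ, mul_comm]

lemma pat_prod_erase_add (d j : ℕ) (hj1 : 1 ≤ j) (hjd : j ≤ d) :
    j ! * ((j + j) * ∏ i ∈ (Icc 1 d).erase j, (i + j)) = (d + j)! := by
  rw [Finset.mul_prod_erase _ (fun i => i + j) (by simp [mem_Icc]; omega)] at *
  exact pat_prod_add_shift j d

lemma pat_prod_erase_dist (d j : ℕ) (hj1 : 1 ≤ j) (hjd : j ≤ d) :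
    (∏ i ∈ (Icc 1 d).erase j, Nat.dist i j) = (j - 1)! * (d - j)! := by
  have hsplit : (Icc 1 d).erase j = Icc 1 (j-1) ∪ Icc (j+1) d := by
    ext x; simp only [mem_erase, mem_Icc, mem_union]; omega
  have hdisj : Disjoint (Icc 1 (j-1)) (Icc (j+1) d) := by
    rw [Finset.disjoint_left]; intro x hx hx'; simp [mem_Icc] at hx hx'; omega
  rw [hsplit, Finset.prod_union hdisj]
  congr 1
  · rw [Finset.prod_congr rfl (fun i hi => Nat.dist_eq_sub_of_le (by simp [mem_Icc] at hi; omega))]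
    rw [show Icc 1 (j-1) = Icc 1 (j-1) from rfl]
    rw [← pat_prod_Icc_id (j-1)]
    apply Finset.prod_nbij' (fun i => j - i) (fun i => j - i)
    · intro a ha; simp [mem_Icc] at ha ⊢; omega
    · intro a ha; simp [mem_Icc] at ha ⊢; omega
    · intro a ha; simp [mem_Icc] at ha; omega
    · intro a ha; simp [mem_Icc] at ha; omega
    · intro a ha; rfl
  · rw [Finset.prod_congr rfl (fun i hi => Nat.dist_eq_sub_of_le_right (by simp [mem_Icc] at hi; omega))]
    rw [← pat_prod_Icc_id (d-j)]
    apply Finset.prod_nbij' (fun i => i - j) (fun i => i + j)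
    · intro a ha; simp [mem_Icc] at ha ⊢; omega
    · intro a ha; simp [mem_Icc] at ha ⊢; omega
    · intro a ha; simp [mem_Icc] at ha; omega
    · intro a ha; simp [mem_Icc] at ha; omega
    · intro a ha; rfl

lemma pat_key_nat (d j : ℕ) (hj1 : 1 ≤ j) (hjd : j ≤ d) :
    (∏ i ∈ (Icc 1 d).erase j, (i * i)) ≤ 2 * ∏ i ∈ (Icc 1 d).erase j, ((i + j) * Nat.dist i j) := by
  set E := (Icc 1 d).erase j with hE
  have hA : ∏ i ∈ E, (i * i) = (∏ i ∈ E, i) * (∏ i ∈ E, i) := by rw [← Finset.prod_mul_distrib]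
  have hBC : ∏ i ∈ E, ((i + j) * Nat.dist i j)
      = (∏ i ∈ E, (i + j)) * (∏ i ∈ E, Nat.dist i j) := by rw [← Finset.prod_mul_distrib]
  set A := ∏ i ∈ E, i
  set B := ∏ i ∈ E, (i + j)
  set C := ∏ i ∈ E, Nat.dist i j
  rw [hA, hBC]
  have h1 : j * A = d ! := pat_prod_erase_id d j hj1 hjd
  have h2 : j ! * ((j + j) * B) = (d + j)! := pat_prod_erase_add d j hj1 hjd
  have h3 : C = (j - 1)! * (d - j)! := pat_prod_erase_dist d j hj1 hjd
  have hjf : j * (j-1)! = j ! := Nat.mul_factorial_pred (by omega)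
  have hfact : d ! * d ! ≤ (d + j)! * (d - j)! := pat_fact_sq_le d j hjd
  have hKpos : 0 < 2 * j * j * j ! := by positivity
  refine Nat.le_of_mul_le_mul_left ?_ hKpos
  have L : 2 * j * j * j ! * (A * A) = 2 * j ! * (d ! * d !) := by
    rw [← h1]; ring
  have R : 2 * j * j * j ! * (2 * (B * C)) = 2 * j ! * ((d + j)! * (d - j)!) := by
    rw [← h2, h3, ← hjf]; ring
  rw [L, R]
  exact Nat.mul_le_mul_left _ hfact

lemma pat_dist_sq (i j : ℕ) : Nat.dist (i*i) (j*j) = (i + j) * Nat.dist i j := by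
  rcases le_total i j with h | h
  · rw [Nat.dist_eq_sub_of_le (Nat.mul_le_mul h h), Nat.dist_eq_sub_of_le h]
    cases' Nat.le.dest h with k hk
    subst hk
    rw [Nat.sub_eq_iff_eq_add (Nat.mul_le_mul (by omega) (by omega))]
    have : i + k - i = k := by omega
    rw [this]; ring
  · rw [Nat.dist_eq_sub_of_le_right (Nat.mul_le_mul h h), Nat.dist_eq_sub_of_le_right h]
    cases' Nat.le.dest h with k hk
    subst hk
    rw [Nat.sub_eq_iff_eq_add (Nat.mul_le_mul (by omega) (by omega))]
    have : j + k - j = k := by omega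
    rw [this]; ring
open Finset Nat Polynomial

lemma pat_abs_cast_sub (a b : ℕ) : |(a:ℝ) - b| = (Nat.dist a b : ℝ) := by
  rcases le_total a b with h | h
  · rw [Nat.dist_eq_sub_of_le h, abs_sub_comm, abs_of_nonneg (by
      rw [sub_nonneg]; exact_mod_cast h), Nat.cast_sub h]
  · rw [Nat.dist_eq_sub_of_le_right h, abs_of_nonneg (by
      rw [sub_nonneg]; exact_mod_cast h), Nat.cast_sub h]

lemma pat_sum_inv_sq (d : ℕ) (hd : 1 ≤ d) :
    (∑ j ∈ Icc 1 d, (1:ℝ)/(j^2)) ≤ 2 - 1/d := by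
  induction d, hd using Nat.le_induction with
  | base => norm_num
  | succ d hd ih =>
    rw [Finset.sum_Icc_succ_top (by omega)]
    have h1 : (0:ℝ) < d := by exact_mod_cast hd
    have h2 : (0:ℝ) < (d:ℝ) + 1 := by linarith
    have key : (1:ℝ)/((d+1:ℕ):ℝ)^2 ≤ 1/d - 1/((d:ℝ)+1) := by
      push_cast
      rw [div_sub_div _ _ (ne_of_gt h1) (ne_of_gt h2), div_le_div_iff₀ (by positivity) (by positivity)]
      ring_nf; nlinarith
    push_cast at *
    linarith
open Finset Nat Polynomial

lemma pat_basis_abs_le (d m j : ℕ) (hm : 1 ≤ m) (hj1 : 1 ≤ j) (hjd : j ≤ d) :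
    |((Lagrange.basis (range (d+1)) (fun i : ℕ => ((m * i^2 : ℕ) : ℝ)) j).eval 1)|
      ≤ 2 / ((m : ℝ) * (j:ℝ)^2) := by
  set v : ℕ → ℝ := fun i : ℕ => ((m * i^2 : ℕ) : ℝ) with hv
  have heval : ∀ i, (Lagrange.basisDivisor (v j) (v i)).eval 1 = (v j - v i)⁻¹ * (1 - v i) := by
    intro i; simp [Lagrange.basisDivisor]
  rw [Lagrange.basis, eval_prod, Finset.abs_prod]
  rw [Finset.prod_congr rfl (fun i _ => by rw [heval i, abs_mul])]
  -- pull out i = 0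
  have h0mem : (0:ℕ) ∈ (range (d+1)).erase j := by
    simp [Finset.mem_erase]; omega
  rw [← Finset.mul_prod_erase _ _ h0mem]
  have hv0 : v 0 = 0 := by simp [hv]
  have hvj : v j = ((m * j^2 : ℕ) : ℝ) := rfl
  have hvjpos : (0:ℝ) < v j := by
    rw [hvj]; exact_mod_cast Nat.pos_of_ne_zero (by positivity)
  have h0fac : |(v j - v 0)⁻¹| * |1 - v 0| = ((m:ℝ) * (j:ℝ)^2)⁻¹ := by
    rw [hv0, sub_zero, sub_zero, abs_one, mul_one, abs_inv, abs_of_pos hvjpos, hvj]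
    push_cast; ring_nf
  rw [h0fac]
  have hEset : ((range (d+1)).erase j).erase 0 = (Icc 1 d).erase j := by
    ext x; simp [Finset.mem_erase, Finset.mem_Icc, Finset.mem_range]; omega
  rw [hEset]
  -- bound the remaining product by 2
  have hprod : (∏ i ∈ (Icc 1 d).erase j, |(v j - v i)⁻¹| * |1 - v i|) ≤ 2 := by
    have hstep : (∏ i ∈ (Icc 1 d).erase j, |(v j - v i)⁻¹| * |1 - v i|)
        ≤ ∏ i ∈ (Icc 1 d).erase j, (((i*i : ℕ):ℝ) / (((i+j) * Nat.dist i j : ℕ):ℝ)) := by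
      apply Finset.prod_le_prod
      · intro i _; positivity
      · intro i hi
        simp only [Finset.mem_erase, Finset.mem_Icc] at hi
        obtain ⟨hij, hi1, hid⟩ := hi
        have hdistpos : 0 < Nat.dist i j := Nat.dist_pos_of_ne hij
        have hdenpos : 0 < (i+j) * Nat.dist i j := by positivity
        have hden : |v j - v i| = (m:ℝ) * (((i+j) * Nat.dist i j : ℕ):ℝ) := by
          rw [hv]
          rw [pat_abs_cast_sub]
          rw [show Nat.dist (m * j^2) (m * i^2) = m * ((i+j) * Nat.dist i j) by
            rw [Nat.dist_mul_left]
            congr 1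
            rw [show j^2 = j*j by ring, show i^2 = i*i by ring, pat_dist_sq j i,
              Nat.dist_comm j i, Nat.add_comm j i]]
          push_cast; ring
        have hnum : |1 - v i| ≤ (m:ℝ) * ((i*i : ℕ):ℝ) := by
          have h1le : (1:ℝ) ≤ ((m * i^2 : ℕ):ℝ) := by
            exact_mod_cast Nat.one_le_iff_ne_zero.mpr (by positivity)
          rw [hv, abs_sub_comm, abs_of_nonneg (by linarith)]
          have : ((m * i^2 : ℕ):ℝ) = (m:ℝ) * ((i*i:ℕ):ℝ) := by push_cast; ring
          linarith [this ▸ h1le]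
        rw [abs_inv, hden]
        have hmpos : (0:ℝ) < m := by exact_mod_cast hm
        have hdpos : (0:ℝ) < (((i+j) * Nat.dist i j : ℕ):ℝ) := by exact_mod_cast hdenpos
        rw [inv_mul_eq_div, div_le_div_iff₀ (by positivity) hdpos]
        calc |1 - v i| * (((i+j) * Nat.dist i j : ℕ):ℝ)
            ≤ ((m:ℝ) * ((i*i : ℕ):ℝ)) * (((i+j) * Nat.dist i j : ℕ):ℝ) := by
              apply mul_le_mul_of_nonneg_right hnum (le_of_lt hdpos)
          _ = ((i*i : ℕ):ℝ) * ((m:ℝ) * (((i+j) * Nat.dist i j : ℕ):ℝ)) := by ring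
    refine le_trans hstep ?_
    rw [Finset.prod_div_distrib, ← Nat.cast_prod, ← Nat.cast_prod]
    have hdenompos : 0 < ∏ i ∈ (Icc 1 d).erase j, ((i+j) * Nat.dist i j) := by
      apply Finset.prod_pos
      intro i hi
      simp only [Finset.mem_erase, Finset.mem_Icc] at hi
      have := Nat.dist_pos_of_ne hi.1
      positivity
    rw [div_le_iff₀ (by exact_mod_cast hdenompos)]
    have := pat_key_nat d j hj1 hjd
    calc ((∏ i ∈ (Icc 1 d).erase j, (i*i) : ℕ) : ℝ)
        ≤ ((2 * ∏ i ∈ (Icc 1 d).erase j, ((i+j) * Nat.dist i j) : ℕ) : ℝ) := by exact_mod_cast this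
      _ = 2 * ((∏ i ∈ (Icc 1 d).erase j, ((i+j) * Nat.dist i j) : ℕ) : ℝ) := by push_cast; ring
  calc ((m:ℝ) * (j:ℝ)^2)⁻¹ * ∏ i ∈ (Icc 1 d).erase j, (|(v j - v i)⁻¹| * |1 - v i|)
      ≤ ((m:ℝ) * (j:ℝ)^2)⁻¹ * 2 := by
        apply mul_le_mul_of_nonneg_left hprod (by positivity)
    _ = 2 / ((m:ℝ) * (j:ℝ)^2) := by ring
/-- Paturi's lemma: For every `ε > 0` there is `c > 0` such that for all
`N ≥ 1`: any real univariate polynomial `q̂` with `0 ≤ q̂(i) ≤ 1` for every integer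
`0 ≤ i ≤ N` and `|q̂(1) − q̂(0)| ≥ ε` has degree at least `c·√N`. -/
theorem stmt8 (ε : ℝ) (hε : 0 < ε) :
    ∃ c : ℝ, 0 < c ∧
      ∀ (N : ℕ) (_ : 1 ≤ N) (qhat : Polynomial ℝ),
        (∀ i : ℕ, i ≤ N → 0 ≤ qhat.eval (i : ℝ) ∧ qhat.eval (i : ℝ) ≤ 1) →
        ε ≤ |qhat.eval 1 - qhat.eval 0| →
        c * Real.sqrt (N : ℝ) ≤ (qhat.natDegree : ℝ) := by
  set ε' : ℝ := min ε 1 with hε'def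
  have hε'pos : 0 < ε' := lt_min hε one_pos
  have hε'le1 : ε' ≤ 1 := min_le_right _ _
  refine ⟨Real.sqrt (ε' / 17), Real.sqrt_pos.mpr (by positivity), ?_⟩
  intro N hN p hbound habs
  have hε'abs : ε' ≤ |p.eval 1 - p.eval 0| := le_trans (min_le_left _ _) habs
  by_contra hcon
  push_neg at hcon
  set d := p.natDegree with hd
  -- degree can't be 0
  have hd1 : 1 ≤ d := by
    rcases Nat.eq_zero_or_pos d with h0 | h
    · obtain ⟨a, ha⟩ := Polynomial.natDegree_eq_zero.mp h0
      rw [← ha] at hε'abs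
      simp at hε'abs
      linarith
    · exact h
  have hp0 : p ≠ 0 := fun h => by simp [h, hd] at hd1
  -- d^2 < ε'/17 * N
  have hNpos : (0:ℝ) < N := by exact_mod_cast hN
  have hdsq : (d:ℝ)^2 < ε' / 17 * N := by
    have h1 : (d:ℝ) < Real.sqrt (ε'/17) * Real.sqrt N := hcon
    have h2 : (0:ℝ) ≤ (d:ℝ) := Nat.cast_nonneg d
    have := mul_self_lt_mul_self h2 h1
    calc (d:ℝ)^2 = (d:ℝ)*(d:ℝ) := sq (d:ℝ) ▸ by ring
      _ < (Real.sqrt (ε'/17) * Real.sqrt N) * (Real.sqrt (ε'/17) * Real.sqrt N) := this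
      _ = (Real.sqrt (ε'/17))^2 * (Real.sqrt N)^2 := by ring
      _ = ε'/17 * N := by
          rw [Real.sq_sqrt (by positivity), Real.sq_sqrt (le_of_lt hNpos)]
  have hd2N : d^2 ≤ N := by
    have : (d:ℝ)^2 < (N:ℝ) := by nlinarith
    have h2 : ((d^2 : ℕ):ℝ) < (N:ℝ) := by push_cast; exact this
    exact_mod_cast le_of_lt h2
  set m := N / d^2 with hm
  have hd2pos : 0 < d^2 := by positivity
  have hm1 : 1 ≤ m := (Nat.one_le_div_iff hd2pos).mpr hd2N
  -- m > 16/ε'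
  have hmlarge : 16 / ε' < (m:ℝ) := by
    have hmod : N < d^2 * (m + 1) := by
      have h1 := Nat.div_add_mod N (d^2)
      have h2 := Nat.mod_lt N hd2pos
      have h3 : d^2*(m+1) = d^2*(N/d^2) + d^2 := by rw [hm]; ring
      omega
    have hmodR : (N:ℝ) < (d:ℝ)^2 * ((m:ℝ) + 1) := by exact_mod_cast hmod
    have hdR : (0:ℝ) < (d:ℝ)^2 := by positivity
    -- (N:ℝ) < (ε'/17 * N) * (m+1)
    have h3 : (N:ℝ) < ε'/17 * N * ((m:ℝ)+1) := by nlinarith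
    have h4 : 17 < ε' * ((m:ℝ)+1) := by nlinarith
    rw [div_lt_iff₀ hε'pos]
    nlinarith
  -- interpolation setup
  set v : ℕ → ℝ := fun i : ℕ => ((m * i^2 : ℕ) : ℝ) with hv
  have hvs : Set.InjOn v (range (d+1)) := by
    intro a _ b _ hab
    simp only [hv] at hab
    have : m * a^2 = m * b^2 := by exact_mod_cast hab
    have : a^2 = b^2 := Nat.eq_of_mul_eq_mul_left (by omega) this
    exact Nat.pow_left_injective (by norm_num) this
  have hdeg : p.degree < (#(range (d+1)) : ℕ) := by
    rw [Finset.card_range, ← Polynomial.natDegree_lt_iff_degree_lt hp0]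
    omega
  have hI := Lagrange.eq_interpolate hvs hdeg
  set B : ℕ → ℝ := fun j => (Lagrange.basis (range (d+1)) v j).eval 1 with hB
  have heval1 : p.eval 1 = ∑ j ∈ range (d+1), p.eval (v j) * B j := by
    conv_lhs => rw [hI]
    rw [Lagrange.interpolate_apply, Polynomial.eval_finset_sum]
    exact Finset.sum_congr rfl fun j _ => by rw [Polynomial.eval_mul, Polynomial.eval_C]
  have hsumB : ∑ j ∈ range (d+1), B j = 1 := by
    have := Lagrange.sum_basis hvs (by simp : (range (d+1)).Nonempty)
    calc ∑ j ∈ range (d+1), B j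
        = (∑ j ∈ range (d+1), Lagrange.basis (range (d+1)) v j).eval 1 := by
          rw [Polynomial.eval_finset_sum]
      _ = 1 := by rw [this]; simp
  have hdiff : p.eval 1 - p.eval 0 = ∑ j ∈ range (d+1), (p.eval (v j) - p.eval 0) * B j := by
    rw [heval1]
    rw [Finset.sum_congr rfl (fun j _ => by ring :
      ∀ j ∈ range (d+1), (p.eval (v j) - p.eval 0) * B j
        = p.eval (v j) * B j - p.eval 0 * B j)]
    rw [Finset.sum_sub_distrib, ← Finset.mul_sum, hsumB, mul_one]
  -- drop the j = 0 term
  have hv0 : v 0 = 0 := by simp [hv]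
  have h0mem : (0:ℕ) ∈ range (d+1) := by simp
  have hdiff2 : p.eval 1 - p.eval 0
      = ∑ j ∈ (range (d+1)).erase 0, (p.eval (v j) - p.eval 0) * B j := by
    rw [hdiff, ← Finset.add_sum_erase _ _ h0mem, hv0]
    simp
  have hEset : (range (d+1)).erase 0 = Icc 1 d := by
    ext x; simp [Finset.mem_erase, Finset.mem_Icc, Finset.mem_range]; omega
  -- bound each term
  have hterm : ∀ j ∈ Icc 1 d, |(p.eval (v j) - p.eval 0) * B j| ≤ 2 / ((m:ℝ) * (j:ℝ)^2) := by
    intro j hj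
    simp only [Finset.mem_Icc] at hj
    have hjN : m * j^2 ≤ N := by
      calc m * j^2 ≤ m * d^2 := Nat.mul_le_mul_left m (Nat.pow_le_pow_left hj.2 2)
        _ ≤ N := Nat.div_mul_le_self N (d^2)
    have hb1 := hbound (m * j^2) hjN
    have hb0 := hbound 0 (by omega)
    have habsle : |p.eval (v j) - p.eval 0| ≤ 1 := by
      rw [hv]
      simp only [Nat.cast_zero] at hb0
      rw [abs_le]; constructor <;> [linarith [hb1.1, hb0.2]; linarith [hb1.2, hb0.1]]
    have hBle : |B j| ≤ 2 / ((m:ℝ) * (j:ℝ)^2) := pat_basis_abs_le d m j hm1 hj.1 hj.2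
    calc |(p.eval (v j) - p.eval 0) * B j| = |p.eval (v j) - p.eval 0| * |B j| := abs_mul _ _
      _ ≤ 1 * |B j| := mul_le_mul_of_nonneg_right habsle (abs_nonneg _)
      _ = |B j| := one_mul _
      _ ≤ 2 / ((m:ℝ) * (j:ℝ)^2) := hBle
  -- total bound
  have hmposR : (0:ℝ) < m := by exact_mod_cast hm1
  have htotal : |p.eval 1 - p.eval 0| ≤ 4 / (m:ℝ) := by
    rw [hdiff2, hEset]
    calc |∑ j ∈ Icc 1 d, (p.eval (v j) - p.eval 0) * B j|
        ≤ ∑ j ∈ Icc 1 d, |(p.eval (v j) - p.eval 0) * B j| := Finset.abs_sum_le_sum_abs _ _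
      _ ≤ ∑ j ∈ Icc 1 d, 2 / ((m:ℝ) * (j:ℝ)^2) := Finset.sum_le_sum hterm
      _ = (2/(m:ℝ)) * ∑ j ∈ Icc 1 d, (1:ℝ)/(j:ℝ)^2 := by
          rw [Finset.mul_sum]
          exact Finset.sum_congr rfl fun j _ => by
            rw [div_mul_eq_mul_div]; ring_nf
      _ ≤ (2/(m:ℝ)) * (2 - 1/(d:ℝ)) := by
          apply mul_le_mul_of_nonneg_left (pat_sum_inv_sq d hd1) (by positivity)
      _ ≤ (2/(m:ℝ)) * 2 := by
          apply mul_le_mul_of_nonneg_left ?_ (by positivity)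
          have : (0:ℝ) < d := by exact_mod_cast hd1
          have : (0:ℝ) < 1/(d:ℝ) := by positivity
          linarith
      _ = 4 / (m:ℝ) := by ring
  -- contradiction: ε' ≤ 4/m < ε'/4
  have hfinal : 4 / (m:ℝ) < ε' / 4 := by
    rw [div_lt_div_iff₀ hmposR (by norm_num)]
    have h16 : 16 / ε' < (m:ℝ) := hmlarge
    rw [div_lt_iff₀ hε'pos] at h16
    linarith
  linarith
end
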